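/- DEC equals FEM locally (content of Theorem 4.7 combined with the identity dᵢ = eᵢ/lᵢ): let t = x₀x₁x₂ be an acute triangle in the Euclidean plane, u : ℝ² → ℝ affine with values uᵢ = u(xᵢ), and φ₀ the barycentric coordinate function of x₀. Then ∫_t ⟪∇u, ∇φ₀⟫ dx = −(e₂/l₂)·u₁ + (e₁/l₁ + e₂/l₂)·u₀ − (e₁/l₁)·u₂, where eᵢ is the distance from the circumcenter to the midpoint of the side opposite xᵢ and lᵢ is the length of that side. -/

import Mathlib

open EuclideanGeometry Real MeasureTheory
open scoped RealInnerProductSpace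

open Set in
private lemma stdtri_hull' : convexHull ℝ {((0:ℝ),(0:ℝ)), (1,0), (0,1)}
    = {p : ℝ × ℝ | 0 ≤ p.1 ∧ 0 ≤ p.2 ∧ p.1 + p.2 ≤ 1} := by
  apply Subset.antisymm
  · apply convexHull_min
    · rintro p hp
      simp only [mem_insert_iff, mem_singleton_iff] at hp
      rcases hp with rfl | rfl | rfl <;> norm_num
    · rintro x ⟨hx1, hx2, hx3⟩ y ⟨hy1, hy2, hy3⟩ a b ha hb hab
      simp only [mem_setOf_eq, Prod.fst_add, Prod.snd_add, Prod.smul_fst, Prod.smul_snd,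
        smul_eq_mul]
      refine ⟨by nlinarith, by nlinarith, by nlinarith⟩
  · rintro p ⟨h1, h2, h3⟩
    have := Finset.centerMass_mem_convexHull (Finset.univ : Finset (Fin 3))
      (s := {((0:ℝ),(0:ℝ)), (1,0), (0,1)})
      (w := ![1 - p.1 - p.2, p.1, p.2]) (z := ![((0:ℝ),(0:ℝ)), (1,0), (0,1)])
      (by intro i _; fin_cases i <;> simp <;> linarith)
      (by simp [Fin.sum_univ_three]; linarith)
      (by intro i _; fin_cases i <;> simp)
    rwa [Finset.centerMass_eq_of_sum_1, show ∑ i, ![1 - p.1 - p.2, p.1, p.2] i •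
        ![((0:ℝ),(0:ℝ)), (1,0), (0,1)] i = p from ?_] at this
    · simp [Fin.sum_univ_three, Prod.ext_iff]
    · simp [Fin.sum_univ_three]; linarith

open Set in
private lemma stdtri_meas' : MeasurableSet {p : ℝ × ℝ | 0 ≤ p.1 ∧ 0 ≤ p.2 ∧ p.1 + p.2 ≤ 1} := by
  apply MeasurableSet.inter
  · exact measurableSet_le measurable_const measurable_fst
  apply MeasurableSet.inter
  · exact measurableSet_le measurable_const measurable_snd
  · exact measurableSet_le (measurable_fst.add measurable_snd) measurable_const

open Set in
private lemma stdtri_vol' :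
    volume {p : ℝ × ℝ | 0 ≤ p.1 ∧ 0 ≤ p.2 ∧ p.1 + p.2 ≤ 1} = ENNReal.ofReal (1/2) := by
  have hmeas := stdtri_meas'
  rw [Measure.volume_eq_prod, Measure.prod_apply hmeas]
  have hslice : ∀ x : ℝ, (Prod.mk x ⁻¹' {p : ℝ × ℝ | 0 ≤ p.1 ∧ 0 ≤ p.2 ∧ p.1 + p.2 ≤ 1})
      = if x ∈ Icc (0:ℝ) 1 then Icc 0 (1-x) else ∅ := by
    intro x
    by_cases hx : x ∈ Icc (0:ℝ) 1
    · simp only [hx, if_true]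
      ext y; simp only [mem_preimage, mem_setOf_eq, mem_Icc]
      constructor
      · rintro ⟨-, h2, h3⟩; exact ⟨h2, by linarith⟩
      · rintro ⟨h2, h3⟩; exact ⟨hx.1, h2, by linarith⟩
    · simp only [hx, if_false]
      ext y; simp only [mem_preimage, mem_setOf_eq, mem_empty_iff_false, iff_false]
      rintro ⟨h1, h2, h3⟩
      rw [mem_Icc] at hx; push_neg at hx
      have := hx h1; linarith
  simp_rw [hslice]
  rw [show (fun x => volume (if x ∈ Icc (0:ℝ) 1 then Icc 0 (1-x) else ∅))
      = (Icc (0:ℝ) 1).indicator (fun x => ENNReal.ofReal (1-x)) from ?_]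
  · rw [lintegral_indicator measurableSet_Icc]
    rw [← ofReal_integral_eq_lintegral_ofReal]
    · congr 1
      rw [integral_Icc_eq_integral_Ioc, ← intervalIntegral.integral_of_le zero_le_one]
      rw [intervalIntegral.integral_sub intervalIntegrable_const
        intervalIntegral.intervalIntegrable_id]
      simp; norm_num
    · exact (continuous_const.sub continuous_id).integrableOn_Icc
    · filter_upwards [ae_restrict_mem measurableSet_Icc] with x hx
      simp only [Pi.zero_apply]; linarith [hx.2]
  · ext x
    by_cases hx : x ∈ Icc (0:ℝ) 1 <;> simp [hx, Real.volume_Icc, indicator]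

private noncomputable def Lmap' (x₀ x₁ x₂ : EuclideanSpace ℝ (Fin 2)) :
    EuclideanSpace ℝ (Fin 2) →ₗ[ℝ] EuclideanSpace ℝ (Fin 2) where
  toFun y := y 0 • (x₁ - x₀) + y 1 • (x₂ - x₀)
  map_add' a b := by
    simp only [PiLp.add_apply]
    module
  map_smul' r a := by
    simp only [PiLp.smul_apply, smul_eq_mul, RingHom.id_apply]
    module

private noncomputable def hmap' : EuclideanSpace ℝ (Fin 2) →ₗ[ℝ] ℝ × ℝ where
  toFun y := (y 0, y 1)
  map_add' a b := by simp [PiLp.add_apply, Prod.ext_iff]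
  map_smul' r a := by simp [PiLp.smul_apply, Prod.ext_iff]

private lemma hmap'_inj : Function.Injective (hmap' : EuclideanSpace ℝ (Fin 2) →ₗ[ℝ] ℝ × ℝ) := by
  intro y y' hh
  ext i
  fin_cases i
  · exact congrArg Prod.fst hh
  · exact congrArg Prod.snd hh

private lemma hmap'_eq_comp : ⇑(hmap') = (MeasurableEquiv.finTwoArrow : (Fin 2 → ℝ) ≃ᵐ (ℝ × ℝ)) ∘
    ((MeasurableEquiv.toLp 2 (Fin 2 → ℝ)).symm : EuclideanSpace ℝ (Fin 2) ≃ᵐ (Fin 2 → ℝ)) := by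
  funext y
  simp [hmap', LinearMap.coe_mk, AddHom.coe_mk, MeasurableEquiv.finTwoArrow]
  rfl

private noncomputable abbrev Ee₀ : EuclideanSpace ℝ (Fin 2) := EuclideanSpace.single 0 1
private noncomputable abbrev Ee₁ : EuclideanSpace ℝ (Fin 2) := EuclideanSpace.single 1 1

open Set in
private lemma euc_base_hull' : convexHull ℝ {(0 : EuclideanSpace ℝ (Fin 2)), Ee₀, Ee₁}
    = hmap' ⁻¹' {p : ℝ × ℝ | 0 ≤ p.1 ∧ 0 ≤ p.2 ∧ p.1 + p.2 ≤ 1} := by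
  have him : hmap' '' convexHull ℝ {(0 : EuclideanSpace ℝ (Fin 2)), Ee₀, Ee₁}
      = {p : ℝ × ℝ | 0 ≤ p.1 ∧ 0 ≤ p.2 ∧ p.1 + p.2 ≤ 1} := by
    have h0 : hmap' (0 : EuclideanSpace ℝ (Fin 2)) = ((0:ℝ),(0:ℝ)) := map_zero _
    have h1 : hmap' Ee₀ = ((1:ℝ),(0:ℝ)) := by rw [show hmap' Ee₀ = (Ee₀ 0, Ee₀ 1) from rfl]; simp [EuclideanSpace.single_apply]
    have h2 : hmap' Ee₁ = ((0:ℝ),(1:ℝ)) := by rw [show hmap' Ee₁ = (Ee₁ 0, Ee₁ 1) from rfl]; simp [EuclideanSpace.single_apply]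
    rw [LinearMap.image_convexHull, Set.image_insert_eq, Set.image_insert_eq,
      Set.image_singleton, h0, h1, h2, stdtri_hull']
  rw [← him, preimage_image_eq _ hmap'_inj]

private lemma euc_base_vol' : volume (convexHull ℝ {(0 : EuclideanSpace ℝ (Fin 2)), Ee₀, Ee₁})
    = ENNReal.ofReal (1/2) := by
  rw [euc_base_hull', ← stdtri_vol', hmap'_eq_comp]
  exact ((volume_preserving_finTwoArrow ℝ).comp
    (EuclideanSpace.volume_preserving_symm_measurableEquiv_toLp (Fin 2))).measure_preimage
    stdtri_meas'.nullMeasurableSet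

open Set in
private lemma vol_hull' (x₀ x₁ x₂ : EuclideanSpace ℝ (Fin 2)) :
    volume (convexHull ℝ {x₀, x₁, x₂}) =
      ENNReal.ofReal (|(x₁ 0 - x₀ 0) * (x₂ 1 - x₀ 1) - (x₁ 1 - x₀ 1) * (x₂ 0 - x₀ 0)| / 2) := by
  have hL0 : Lmap' x₀ x₁ x₂ Ee₀ = x₁ - x₀ := by
    simp [Lmap', EuclideanSpace.single_apply]
  have hL1 : Lmap' x₀ x₁ x₂ Ee₁ = x₂ - x₀ := by
    simp [Lmap', EuclideanSpace.single_apply]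
  have himage : convexHull ℝ {x₀, x₁, x₂}
      = (fun y => x₀ + y) '' ((Lmap' x₀ x₁ x₂) ''
        (convexHull ℝ {(0 : EuclideanSpace ℝ (Fin 2)), Ee₀, Ee₁})) := by
    rw [LinearMap.image_convexHull]
    have := (AffineEquiv.constVAdd ℝ (EuclideanSpace ℝ (Fin 2)) x₀).toAffineMap.image_convexHull
      ((Lmap' x₀ x₁ x₂) '' {(0 : EuclideanSpace ℝ (Fin 2)), Ee₀, Ee₁})
    simp only [AffineEquiv.coe_toAffineMap, AffineEquiv.constVAdd_apply, vadd_eq_add] at this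
    rw [this]
    congr 1
    simp only [Set.image_insert_eq, Set.image_singleton, map_zero, hL0, hL1]
    rw [add_zero, add_sub_cancel, add_sub_cancel]
  rw [himage]
  have hdet : LinearMap.det (Lmap' x₀ x₁ x₂)
      = (x₁ 0 - x₀ 0) * (x₂ 1 - x₀ 1) - (x₁ 1 - x₀ 1) * (x₂ 0 - x₀ 0) := by
    rw [← LinearMap.det_toMatrix (EuclideanSpace.basisFun (Fin 2) ℝ).toBasis, Matrix.det_fin_two]
    simp [LinearMap.toMatrix_apply, Lmap', EuclideanSpace.single_apply,
      OrthonormalBasis.coe_toBasis_repr_apply, EuclideanSpace.basisFun_repr,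
      OrthonormalBasis.coe_toBasis, EuclideanSpace.basisFun_apply, PiLp.add_apply,
      PiLp.smul_apply, PiLp.sub_apply]
    ring
  have : (fun y => x₀ + y) '' ((Lmap' x₀ x₁ x₂) ''
        (convexHull ℝ {(0 : EuclideanSpace ℝ (Fin 2)), Ee₀, Ee₁}))
      = (fun y => -x₀ + y) ⁻¹' ((Lmap' x₀ x₁ x₂) ''
        (convexHull ℝ {(0 : EuclideanSpace ℝ (Fin 2)), Ee₀, Ee₁})) := by
    ext z
    simp only [mem_image, mem_preimage]
    constructor
    · rintro ⟨y, hy, rfl⟩; simpa using hy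
    · intro h; exact ⟨-x₀ + z, h, by abel⟩
  rw [this, measure_preimage_add, Measure.addHaar_image_linearMap, hdet, euc_base_vol',
    ← ENNReal.ofReal_mul (abs_nonneg _)]
  congr 1
  ring
/-- DEC equals FEM locally: for an acute triangle `t = x₀x₁x₂` in the Euclidean plane
with circumcenter `C`, `eᵢ` the distance from `C` to the midpoint of the side opposite
`xᵢ`, `lᵢ` the length of that side, an affine function `u x = ⟪g, x⟫ + c` with values
`uᵢ = u xᵢ`, and `φ₀` the barycentric coordinate function of `x₀`:
`∫_t ⟪∇u, ∇φ₀⟫ dx = -(e₂/l₂) * u₁ + (e₁/l₁ + e₂/l₂) * u₀ - (e₁/l₁) * u₂`. -/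
theorem dec_eq_fem_locally
    (x₀ x₁ x₂ C : EuclideanSpace ℝ (Fin 2))
    (hind : AffineIndependent ℝ ![x₀, x₁, x₂])
    (h01 : dist C x₀ = dist C x₁) (h02 : dist C x₀ = dist C x₂)
    (hθ₀ : ∠ x₁ x₀ x₂ < π / 2) (hθ₁ : ∠ x₀ x₁ x₂ < π / 2)
    (hθ₂ : ∠ x₀ x₂ x₁ < π / 2)
    (g gφ : EuclideanSpace ℝ (Fin 2)) (c cφ : ℝ)
    (u φ₀ : EuclideanSpace ℝ (Fin 2) → ℝ)
    (hu : ∀ x, u x = ⟪g, x⟫ + c)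
    (hφ : ∀ x, φ₀ x = ⟪gφ, x⟫ + cφ)
    (hφ₀ : φ₀ x₀ = 1) (hφ₁ : φ₀ x₁ = 0) (hφ₂ : φ₀ x₂ = 0) :
    ∫ _x in convexHull ℝ {x₀, x₁, x₂}, ⟪g, gφ⟫ ∂volume =
      -(dist C (midpoint ℝ x₀ x₁) / dist x₀ x₁) * u x₁ +
        (dist C (midpoint ℝ x₀ x₂) / dist x₀ x₂ +
          dist C (midpoint ℝ x₀ x₁) / dist x₀ x₁) * u x₀ -
        dist C (midpoint ℝ x₀ x₂) / dist x₀ x₂ * u x₂ := by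
  -- coordinate computation helpers
  have hi : ∀ y z : EuclideanSpace ℝ (Fin 2), ⟪y, z⟫ = y 0 * z 0 + y 1 * z 1 := by
    intro y z
    simp [PiLp.inner_apply, RCLike.inner_apply, Fin.sum_univ_two]
    ring
  have hd : ∀ y z : EuclideanSpace ℝ (Fin 2), dist y z ^ 2 = (y 0 - z 0)^2 + (y 1 - z 1)^2 := by
    intro y z
    rw [EuclideanSpace.dist_eq, Real.sq_sqrt (by positivity)]
    simp [Fin.sum_univ_two, Real.dist_eq, sq_abs]
  have hm : ∀ (y z : EuclideanSpace ℝ (Fin 2)) (i : Fin 2),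
      (midpoint ℝ y z) i = (y i + z i)/2 := by
    intro y z i
    rw [midpoint_eq_smul_add, PiLp.smul_apply, PiLp.add_apply]
    simp [smul_eq_mul]
    ring
  -- distinctness
  have hne01 : x₀ ≠ x₁ := by
    intro h
    exact (by decide : (0:Fin 3) ≠ 1) (hind.injective (show ![x₀,x₁,x₂] 0 = ![x₀,x₁,x₂] 1 by
      simpa using h))
  have hne02 : x₀ ≠ x₂ := by
    intro h
    exact (by decide : (0:Fin 3) ≠ 2) (hind.injective (show ![x₀,x₁,x₂] 0 = ![x₀,x₁,x₂] 2 by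
      simpa using h))
  -- the determinant
  set D : ℝ := (x₁ 0 - x₀ 0) * (x₂ 1 - x₀ 1) - (x₁ 1 - x₀ 1) * (x₂ 0 - x₀ 0) with hDdef
  have h2pt : ∀ y z : EuclideanSpace ℝ (Fin 2), y 0 = z 0 → y 1 = z 1 → y = z := by
    intro y z h0 h1
    ext i
    fin_cases i
    · exact h0
    · exact h1
  have hD : D ≠ 0 := by
    intro hD0
    rw [affineIndependent_iff_not_collinear] at hind
    apply hind
    have hcoord : x₁ 0 - x₀ 0 ≠ 0 ∨ x₁ 1 - x₀ 1 ≠ 0 := by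
      by_contra hc
      push_neg at hc
      exact hne01 (h2pt x₀ x₁ (by linarith [hc.1]) (by linarith [hc.2]))
    have hset : (Set.range ![x₀, x₁, x₂]) = {x₀, x₁, x₂} := by
      ext y
      constructor
      · rintro ⟨i, rfl⟩
        fin_cases i <;> simp
      · rintro (rfl | rfl | rfl)
        exacts [⟨0, rfl⟩, ⟨1, rfl⟩, ⟨2, rfl⟩]
    rw [hset, collinear_iff_of_mem (Set.mem_insert x₀ _)]
    refine ⟨x₁ - x₀, ?_⟩
    rintro p hp
    simp only [Set.mem_insert_iff, Set.mem_singleton_iff] at hp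
    rcases hp with rfl | rfl | hpe
    · exact ⟨0, by simp⟩
    · exact ⟨1, by simp⟩
    · rw [hpe]
      rw [hDdef] at hD0
      rcases hcoord with h0 | h1
      · refine ⟨(x₂ 0 - x₀ 0) / (x₁ 0 - x₀ 0), h2pt _ _ ?_ ?_⟩
        · simp only [vadd_eq_add, PiLp.add_apply, PiLp.smul_apply, PiLp.sub_apply, smul_eq_mul]
          field_simp
          ring
        · simp only [vadd_eq_add, PiLp.add_apply, PiLp.smul_apply, PiLp.sub_apply, smul_eq_mul]
          field_simp
          linear_combination hD0
      · refine ⟨(x₂ 1 - x₀ 1) / (x₁ 1 - x₀ 1), h2pt _ _ ?_ ?_⟩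
        · simp only [vadd_eq_add, PiLp.add_apply, PiLp.smul_apply, PiLp.sub_apply, smul_eq_mul]
          field_simp
          linear_combination -hD0
        · simp only [vadd_eq_add, PiLp.add_apply, PiLp.smul_apply, PiLp.sub_apply, smul_eq_mul]
          field_simp
          ring
  have hDabs : (0:ℝ) < |D| := abs_pos.mpr hD
  -- angles give positive inner products
  have hang : ∀ s t w : EuclideanSpace ℝ (Fin 2), ∠ s w t < π/2 → (0:ℝ) < ⟪s - w, t - w⟫ := by
    intro s t w h
    unfold EuclideanGeometry.angle InnerProductGeometry.angle at h
    have h' := Real.arccos_lt_pi_div_two.mp h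
    rcases div_pos_iff.mp h' with ⟨h1, _⟩ | ⟨_, h2⟩
    · simpa [vsub_eq_sub] using h1
    · exact absurd h2 (not_lt.mpr (by positivity))
  have hk2 := hang x₀ x₁ x₂ hθ₂
  have hk1 := hang x₀ x₂ x₁ hθ₁
  rw [hi] at hk2 hk1
  simp only [PiLp.sub_apply] at hk2 hk1
  -- circumcenter equations
  have heqsq : ∀ z w : EuclideanSpace ℝ (Fin 2), dist C z = dist C w →
      (C 0 - z 0)^2 + (C 1 - z 1)^2 = (C 0 - w 0)^2 + (C 1 - w 1)^2 := by
    intro z w h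
    have h2 : dist C z ^ 2 = dist C w ^ 2 := by rw [h]
    rw [hd, hd] at h2
    exact h2
  have heq1 := heqsq x₀ x₁ h01
  have heq2 := heqsq x₀ x₂ h02
  have h2D : (2:ℝ)*D ≠ 0 := by
    intro h; exact hD (by linarith)
  have hp2 : 2*D*(C 0) = ((x₁ 0)^2 + (x₁ 1)^2 - (x₀ 0)^2 - (x₀ 1)^2) * (x₂ 1 - x₀ 1)
      - ((x₂ 0)^2 + (x₂ 1)^2 - (x₀ 0)^2 - (x₀ 1)^2) * (x₁ 1 - x₀ 1) := by
    linear_combination (x₂ 1 - x₀ 1) * heq1 - (x₁ 1 - x₀ 1) * heq2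
  have hq2 : 2*D*(C 1) = (x₁ 0 - x₀ 0) * ((x₂ 0)^2 + (x₂ 1)^2 - (x₀ 0)^2 - (x₀ 1)^2)
      - (x₂ 0 - x₀ 0) * ((x₁ 0)^2 + (x₁ 1)^2 - (x₀ 0)^2 - (x₀ 1)^2) := by
    linear_combination (x₁ 0 - x₀ 0) * heq2 - (x₂ 0 - x₀ 0) * heq1
  have hCp : C 0 = (((x₁ 0)^2 + (x₁ 1)^2 - (x₀ 0)^2 - (x₀ 1)^2) * (x₂ 1 - x₀ 1)
      - ((x₂ 0)^2 + (x₂ 1)^2 - (x₀ 0)^2 - (x₀ 1)^2) * (x₁ 1 - x₀ 1)) / (2*D) := by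
    rw [eq_div_iff h2D]; linear_combination hp2
  have hCq : C 1 = ((x₁ 0 - x₀ 0) * ((x₂ 0)^2 + (x₂ 1)^2 - (x₀ 0)^2 - (x₀ 1)^2)
      - (x₂ 0 - x₀ 0) * ((x₁ 0)^2 + (x₁ 1)^2 - (x₀ 0)^2 - (x₀ 1)^2)) / (2*D) := by
    rw [eq_div_iff h2D]; linear_combination hq2
  -- the two side quantities
  set K2 : ℝ := (x₀ 0 - x₂ 0) * (x₁ 0 - x₂ 0) + (x₀ 1 - x₂ 1) * (x₁ 1 - x₂ 1) with hK2def
  set K1 : ℝ := (x₀ 0 - x₁ 0) * (x₂ 0 - x₁ 0) + (x₀ 1 - x₁ 1) * (x₂ 1 - x₁ 1) with hK1def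
  have l2pos : (0:ℝ) < dist x₀ x₁ := dist_pos.mpr hne01
  have l1pos : (0:ℝ) < dist x₀ x₂ := dist_pos.mpr hne02
  -- squared ratio identities
  have key2sq : (2*|D| * dist C (midpoint ℝ x₀ x₁))^2 = (K2 * dist x₀ x₁)^2 := by
    rw [mul_pow, mul_pow, mul_pow, hd, hd, sq_abs, hm x₀ x₁ 0, hm x₀ x₁ 1, hCp, hCq]
    field_simp
    ring
  have key1sq : (2*|D| * dist C (midpoint ℝ x₀ x₂))^2 = (K1 * dist x₀ x₂)^2 := by
    rw [mul_pow, mul_pow, mul_pow, hd, hd, sq_abs, hm x₀ x₂ 0, hm x₀ x₂ 1, hCp, hCq]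
    field_simp
    ring
  have key2 : 2*|D| * dist C (midpoint ℝ x₀ x₁) = K2 * dist x₀ x₁ :=
    (sq_eq_sq₀ (by positivity) (mul_nonneg hk2.le dist_nonneg)).mp key2sq
  have key1 : 2*|D| * dist C (midpoint ℝ x₀ x₂) = K1 * dist x₀ x₂ :=
    (sq_eq_sq₀ (by positivity) (mul_nonneg hk1.le dist_nonneg)).mp key1sq
  have ratio2 : dist C (midpoint ℝ x₀ x₁) / dist x₀ x₁ = K2 / (2*|D|) := by
    rw [div_eq_div_iff l2pos.ne' (by positivity)]
    linear_combination key2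
  have ratio1 : dist C (midpoint ℝ x₀ x₂) / dist x₀ x₂ = K1 / (2*|D|) := by
    rw [div_eq_div_iff l1pos.ne' (by positivity)]
    linear_combination key1
  -- the barycentric gradient constraints
  rw [hφ x₀, hi] at hφ₀
  rw [hφ x₁, hi] at hφ₁
  rw [hφ x₂, hi] at hφ₂
  have c1 : gφ 0 * (x₀ 0 - x₁ 0) + gφ 1 * (x₀ 1 - x₁ 1) = 1 := by
    linear_combination hφ₀ - hφ₁
  have c2 : gφ 0 * (x₀ 0 - x₂ 0) + gφ 1 * (x₀ 1 - x₂ 1) = 1 := by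
    linear_combination hφ₀ - hφ₂
  -- the core algebraic identity
  have main : D^2 * (g 0 * gφ 0 + g 1 * gφ 1)
      = K2 * (g 0 * (x₀ 0 - x₁ 0) + g 1 * (x₀ 1 - x₁ 1))
        + K1 * (g 0 * (x₀ 0 - x₂ 0) + g 1 * (x₀ 1 - x₂ 1)) := by
    linear_combination (D * (g 0 * (x₀ 1 - x₂ 1) - g 1 * (x₀ 0 - x₂ 0))) * c1
      + (D * (g 1 * (x₀ 0 - x₁ 0) - g 0 * (x₀ 1 - x₁ 1))) * c2
  -- compute the integral
  rw [MeasureTheory.setIntegral_const, measureReal_def, vol_hull', ENNReal.toReal_ofReal (by positivity),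
    smul_eq_mul]
  rw [ratio1, ratio2, hu x₀, hu x₁, hu x₂, hi g x₀, hi g x₁, hi g x₂, hi g gφ]
  have hA2 : |D|^2 = D^2 := sq_abs D
  have hAne : |D| ≠ 0 := hDabs.ne'
  rw [show (-(K2 / (2 * |D|)) * (g 0 * x₁ 0 + g 1 * x₁ 1 + c)
      + (K1 / (2 * |D|) + K2 / (2 * |D|)) * (g 0 * x₀ 0 + g 1 * x₀ 1 + c)
      - K1 / (2 * |D|) * (g 0 * x₂ 0 + g 1 * x₂ 1 + c))
      = (K2 * (g 0 * (x₀ 0 - x₁ 0) + g 1 * (x₀ 1 - x₁ 1))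
        + K1 * (g 0 * (x₀ 0 - x₂ 0) + g 1 * (x₀ 1 - x₂ 1))) / (2*|D|) from by
    field_simp; ring]
  rw [← main, eq_div_iff (by positivity : (2:ℝ)*|D| ≠ 0)]
  linear_combination (g 0 * gφ 0 + g 1 * gφ 1) * hA2
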